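/- Let (D,K,T) be an MD-RSPP instance and let S = {s : (s,t) ∈ K} be the set of sources of commodities. If H is a solution graph of (D,K,T), then there exists a solution graph H' of (D,K,T) with V(H') = V(H) such that the outdegree of every vertex in H' is at most its outdegree in H and every strongly connected component of H' containing at least two vertices contains a vertex of S. -/

import Mathlib

open Relation

variable {V : Type*} [DecidableEq V]

/-- The adjacency relation of a digraph given by its edge set. -/
def Adj (E : Finset (V × V)) : V → V → Prop := fun a b => (a, b) ∈ E

/-- `D` is a digraph: no self-loops (no parallel edges since edges form a set). -/
def IsDigraph (D : Finset (V × V)) : Prop := ∀ e ∈ D, e.1 ≠ e.2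

/-- `l` is a directed `s`-`t`-path w.r.t. the adjacency relation `A`:
a nonempty duplicate-free list of vertices, consecutive ones adjacent,
starting at `s` and ending at `t`. -/
def DiPath (A : V → V → Prop) (s t : V) (l : List V) : Prop :=
  l.Chain' A ∧ l.Nodup ∧ l.head? = some s ∧ l.getLast? = some t

/-- Adjacency in the transitive closure `T(D)` of the digraph with edge set `E`:
`(u,v)` is an edge iff `u ≠ v` and `v` is reachable from `u` in `E`. -/
def TCAdj (E : Finset (V × V)) (u v : V) : Prop :=
  u ≠ v ∧ Relation.ReflTransGen (Adj E) u v

/-- The outdegree of `v` in the digraph with edge set `H`. -/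
def outDeg (H : Finset (V × V)) (v : V) : ℕ :=
  (H.filter fun e => e.1 = v).card

/-- The list of (directed) edges traversed by a list of vertices. -/
def listEdges (l : List V) : List (V × V) := l.zip l.tail

/-- `H` is a solution graph of the MD-RSPP instance `(D,K,T)`: a subgraph of
`T(D)` of maximum outdegree at most `T` containing a directed `s`-`t`-path for
every commodity `(s,t) ∈ K`. -/
def RSPPSolution (D K : Finset (V × V)) (T : ℕ) (H : Finset (V × V)) : Prop :=
  (∀ e ∈ H, TCAdj D e.1 e.2) ∧ (∀ v, outDeg H v ≤ T) ∧
  (∀ k ∈ K, ∃ l, DiPath (Adj H) k.1 k.2 l)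

section Helpers

variable {V : Type*} [DecidableEq V]

lemma reach_mono' {R Q : V → V → Prop} (h : ∀ a b, R a b → ReflTransGen Q a b)
    {a b : V} (hab : ReflTransGen R a b) : ReflTransGen Q a b := by
  induction hab with
  | refl => exact .refl
  | tail _ hbc ih => exact ih.trans (h _ _ hbc)

lemma chain'_reach {R : V → V → Prop} :
    ∀ (l : List V) {s t : V}, l.Chain' R → l.head? = some s → l.getLast? = some t →
      ReflTransGen R s t
  | [], s, t, _, hh, _ => by simp at hh
  | [a], s, t, _, hh, hl => by
      simp at hh hl; subst hh; subst hl; exact .refl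
  | a :: b :: m, s, t, hc, hh, hl => by
      simp only [List.head?_cons, Option.some.injEq] at hh
      subst hh
      rw [List.getLast?_cons_cons] at hl
      rcases List.isChain_cons_cons.1 hc with ⟨hab, hc'⟩
      exact .head hab (chain'_reach (b :: m) hc' rfl hl)

lemma reach_dipath {R : V → V → Prop} {s t : V} (h : ReflTransGen R s t) :
    ∃ l, DiPath R s t l := by
  induction h with
  | refl => exact ⟨[s], List.isChain_singleton s, List.nodup_singleton s, rfl, rfl⟩
  | @tail b c _ hbc ih =>
    obtain ⟨l, hch, hnd, hh, hl⟩ := ih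
    have hlne : l ≠ [] := by rintro rfl; simp at hh
    by_cases hcl : c ∈ l
    · obtain ⟨l₁, l₂, rfl⟩ := List.append_of_mem hcl
      refine ⟨l₁ ++ [c], ?_, ?_, ?_, List.getLast?_concat⟩
      · exact hch.prefix ⟨l₂, by simp⟩
      · exact ((List.append_cons l₁ c l₂ ▸ hnd).sublist
          (by simpa using List.sublist_append_left (l₁ ++ [c]) l₂))
      · have := hh
        rw [show l₁ ++ c :: l₂ = (l₁ ++ [c]) ++ l₂ by simp, List.head?_append] at this
        cases h' : (l₁ ++ [c]).head? with
        | none => simp [List.head?_eq_none_iff] at h'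
        | some x => rw [h', Option.some_or] at this; exact this
    · refine ⟨l ++ [c], ?_, ?_, ?_, List.getLast?_concat⟩
      · refine List.isChain_append.2 ⟨hch, List.isChain_singleton c, ?_⟩
        intro x hx y hy
        simp only [List.head?_cons, Option.mem_def, Option.some.injEq] at hy
        rw [hl] at hx
        simp only [Option.mem_def, Option.some.injEq] at hx
        subst hx; subst hy; exact hbc
      · simp [List.nodup_append, hnd, hcl]; exact fun a ha h => hcl (h ▸ ha)
      · rw [List.head?_append, hh]; rfl

end Helpers

section ZT

variable {V : Type*} [DecidableEq V]

lemma zt_mem {l : List V} {a b : V} (h : (a, b) ∈ l.zip l.tail) : a ∈ l ∧ b ∈ l :=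
  ⟨(List.of_mem_zip h).1, List.mem_of_mem_tail (List.of_mem_zip h).2⟩

lemma zt_cons_cons (a b : V) (m : List V) :
    (a :: b :: m).zip (a :: b :: m).tail = (a, b) :: ((b :: m).zip (b :: m).tail) := rfl

lemma zt_succ_unique : ∀ {l : List V}, l.Nodup → ∀ {a b c : V},
    (a, b) ∈ l.zip l.tail → (a, c) ∈ l.zip l.tail → b = c
  | [], _, _, _, _, h, _ => by simp at h
  | [x], _, _, _, _, h, _ => by simp at h
  | x :: y :: m, hnd, a, b, c, h1, h2 => by
    rw [zt_cons_cons] at h1 h2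
    have hx : x ∉ y :: m := (List.nodup_cons.1 hnd).1
    rcases List.mem_cons.1 h1 with h1' | h1'
    · rcases List.mem_cons.1 h2 with h2' | h2'
      · rw [(Prod.mk.inj h1').2, (Prod.mk.inj h2').2]
      · exact absurd ((Prod.mk.inj h1').1 ▸ (zt_mem h2').1) hx
    · rcases List.mem_cons.1 h2 with h2' | h2'
      · exact absurd ((Prod.mk.inj h2').1 ▸ (zt_mem h1').1) hx
      · exact zt_succ_unique (List.nodup_cons.1 hnd).2 h1' h2' 

lemma zt_ne : ∀ {l : List V}, l.Nodup → ∀ {a b : V}, (a, b) ∈ l.zip l.tail → a ≠ b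
  | [], _, _, _, h => by simp at h
  | [x], _, _, _, h => by simp at h
  | x :: y :: m, hnd, a, b, h => by
    rw [zt_cons_cons] at h
    have hx : x ∉ y :: m := (List.nodup_cons.1 hnd).1
    rcases List.mem_cons.1 h with h' | h'
    · obtain ⟨ha, hb⟩ := Prod.mk.inj h'
      subst ha; subst hb
      exact fun hab => hx (hab ▸ List.mem_cons_self)
    · exact zt_ne (List.nodup_cons.1 hnd).2 h' 

lemma zt_indexOf : ∀ {l : List V}, l.Nodup → ∀ {a b : V}, (a, b) ∈ l.zip l.tail →
    l.idxOf b = l.idxOf a + 1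
  | [], _, _, _, h => by simp at h
  | [x], _, _, _, h => by simp at h
  | x :: y :: m, hnd, a, b, h => by
    rw [zt_cons_cons] at h
    have hx : x ∉ y :: m := (List.nodup_cons.1 hnd).1
    rcases List.mem_cons.1 h with h' | h'
    · obtain ⟨ha, hb⟩ := Prod.mk.inj h'
      subst ha; subst hb
      have hxy : a ≠ b := fun hab => hx (hab ▸ List.mem_cons_self)
      rw [List.idxOf_cons_self, List.idxOf_cons_ne _ hxy, List.idxOf_cons_self]
    · have ha : a ∈ y :: m := (zt_mem h').1
      have hb : b ∈ y :: m := (zt_mem h').2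
      have hax : x ≠ a := fun e => hx (by rw [e]; exact ha)
      have hbx : x ≠ b := fun e => hx (by rw [e]; exact hb)
      rw [List.idxOf_cons_ne _ hax, List.idxOf_cons_ne _ hbx,
        zt_indexOf (List.nodup_cons.1 hnd).2 h']

lemma zt_head_reach {R : V → V → Prop} : ∀ (l : List V) (v1 : V),
    (∀ p ∈ l.zip l.tail, R p.1 p.2) → l.head? = some v1 → ∀ x ∈ l, ReflTransGen R v1 x
  | [], v1, _, hh, _, hx => by simp at hh
  | [y], v1, _, hh, x, hx => by
      simp only [List.head?_cons, Option.some.injEq] at hh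
      simp only [List.mem_singleton] at hx
      subst hh; subst hx; exact .refl
  | y :: z :: m, v1, hR, hh, x, hx => by
      simp only [List.head?_cons, Option.some.injEq] at hh
      subst hh
      rcases List.mem_cons.1 hx with rfl | hx
      · exact .refl
      · have h1 : R y z := hR (y, z) (by rw [zt_cons_cons]; exact List.mem_cons_self)
        have h2 : ReflTransGen R z x :=
          zt_head_reach (z :: m) z
            (fun p hp => hR p (by rw [zt_cons_cons]; exact List.mem_cons_of_mem _ hp)) rfl x hx
        exact .head h1 h2

lemma zt_cover : ∀ {l : List V}, 2 ≤ l.length → ∀ {x : V}, x ∈ l →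
    ∃ p ∈ l.zip l.tail, p.1 = x ∨ p.2 = x
  | [], h, _, _ => by simp at h
  | [y], h, _, _ => by simp at h
  | y :: z :: m, _, x, hx => by
    rcases List.mem_cons.1 hx with rfl | hx
    · exact ⟨(x, z), by rw [zt_cons_cons]; exact List.mem_cons_self, Or.inl rfl⟩
    · cases m with
      | nil =>
        rcases List.mem_singleton.1 hx with rfl
        exact ⟨(y, x), by rw [zt_cons_cons]; exact List.mem_cons_self, Or.inr rfl⟩
      | cons c m' =>
        obtain ⟨p, hp, hpx⟩ := zt_cover (l := z :: c :: m') (by simp) hx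
        exact ⟨p, by rw [zt_cons_cons]; exact List.mem_cons_of_mem _ hp, hpx⟩

end ZT

noncomputable def mu {V : Type*} [Fintype V] [DecidableEq V] (H : Finset (V × V)) : ℕ :=
  @Finset.card _ (@Finset.filter _
    (fun p : V × V => p.1 ≠ p.2 ∧ ReflTransGen (Adj H) p.1 p.2 ∧ ReflTransGen (Adj H) p.2 p.1)
    (fun p => Classical.propDecidable _) Finset.univ)

lemma mu_step {V : Type*} [Fintype V] [DecidableEq V]
    (D K : Finset (V × V)) (T : ℕ) (hD : IsDigraph D)
    (H : Finset (V × V)) (hH : RSPPSolution D K T H)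
    {u u' : V} (hne : u ≠ u') (h1 : ReflTransGen (Adj H) u u')
    (h2 : ReflTransGen (Adj H) u' u)
    (hbad : ¬ ∃ k ∈ K, ReflTransGen (Adj H) u k.1 ∧ ReflTransGen (Adj H) k.1 u) :
    ∃ H'' : Finset (V × V), RSPPSolution D K T H'' ∧
      (∀ v : V, (∃ e ∈ H'', e.1 = v ∨ e.2 = v) ↔ (∃ e ∈ H, e.1 = v ∨ e.2 = v)) ∧
      (∀ v : V, outDeg H'' v ≤ outDeg H v) ∧ mu H'' < mu H := by
  classical
  set C : Finset V :=
    Finset.univ.filter (fun x => ReflTransGen (Adj H) u x ∧ ReflTransGen (Adj H) x u) with hCdef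
  have hmemC : ∀ x : V, x ∈ C ↔ ReflTransGen (Adj H) u x ∧ ReflTransGen (Adj H) x u := by
    intro x; simp [hCdef]
  have hCreach : ∀ a ∈ C, ∀ b ∈ C, ReflTransGen (Adj H) a b := fun a ha b hb =>
    ((hmemC a).1 ha).2.trans ((hmemC b).1 hb).1
  have huC : u ∈ C := (hmemC u).2 ⟨.refl, .refl⟩
  have hu'C : u' ∈ C := (hmemC u').2 ⟨h1, h2⟩
  have hCcard : 1 < C.card := Finset.one_lt_card.2 ⟨u, huC, u', hu'C, hne⟩
  set L : List V := C.toList with hLdef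
  have hLnd : L.Nodup := Finset.nodup_toList C
  have hLC : ∀ x, x ∈ L ↔ x ∈ C := fun x => Finset.mem_toList
  have hLlen : 2 ≤ L.length := by
    rw [hLdef, Finset.length_toList]; omega
  obtain ⟨v1, hv1⟩ : ∃ v1, L.head? = some v1 := by
    cases hL : L with
    | nil => rw [hL] at hLlen; simp at hLlen
    | cons a t => exact ⟨a, rfl⟩
  have hv1L : v1 ∈ L := List.mem_of_mem_head? (by rw [hv1]; rfl)
  have hv1C : v1 ∈ C := (hLC v1).1 hv1L
  set P : Finset (V × V) := (L.zip L.tail).toFinset with hPdef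
  set EI : Finset (V × V) :=
    (H.filter (fun e => e.1 ∉ C ∧ e.2 ∈ C)).image (fun e => (e.1, v1)) with hEIdef
  set F : Finset (V × V) := H.filter (fun e => e.2 ∉ C) with hFdef
  set H'' : Finset (V × V) := F ∪ P ∪ EI with hH''def
  -- membership lemmas
  have hF_sub : ∀ e ∈ H, e.2 ∉ C → e ∈ H'' := by
    intro e he h2
    exact Finset.mem_union_left _ (Finset.mem_union_left _ (Finset.mem_filter.2 ⟨he, h2⟩))
  have hP_sub : ∀ p ∈ L.zip L.tail, p ∈ H'' := by
    intro p hp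
    exact Finset.mem_union_left _ (Finset.mem_union_right _ (List.mem_toFinset.2 hp))
  have hEI_mem : ∀ w a, w ∉ C → a ∈ C → (w, a) ∈ H → (w, v1) ∈ H'' := by
    intro w a hw ha hwa
    refine Finset.mem_union_right _ (Finset.mem_image.2 ⟨(w, a), ?_, rfl⟩)
    exact Finset.mem_filter.2 ⟨hwa, hw, ha⟩
  have hH''_elim : ∀ e ∈ H'', (e ∈ H ∧ e.2 ∉ C) ∨ ((e.1, e.2) ∈ L.zip L.tail) ∨
      (e.2 = v1 ∧ e.1 ∉ C ∧ ∃ a ∈ C, (e.1, a) ∈ H) := by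
    intro e he
    rcases Finset.mem_union.1 he with he | he
    · rcases Finset.mem_union.1 he with he | he
      · exact Or.inl (Finset.mem_filter.1 he)
      · exact Or.inr (Or.inl (by rw [Prod.mk.eta]; exact List.mem_toFinset.1 he))
    · right; right
      obtain ⟨x, hx, hxe⟩ := Finset.mem_image.1 he
      obtain ⟨hxH, hx1, hx2⟩ := Finset.mem_filter.1 hx
      refine ⟨by rw [← hxe], by rw [← hxe]; exact hx1, x.2, hx2, by rw [← hxe]; simpa using hxH⟩
  -- reachability facts
  have hDreach : ∀ {a b : V}, ReflTransGen (Adj H) a b → ReflTransGen (Adj D) a b :=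
    fun h => reach_mono' (fun a b h' => (hH.1 (a, b) h').2) h
  have hstepH : ∀ a b : V, Adj H'' a b → ReflTransGen (Adj H) a b := by
    intro a b hab
    rcases hH''_elim (a, b) hab with ⟨h, _⟩ | h | ⟨hb, ha, c, hc, hac⟩
    · exact .single h
    · have hm := zt_mem h
      exact hCreach a ((hLC _).1 hm.1) b ((hLC _).1 hm.2)
    · have hb' : b = v1 := hb
      have hac' : (a, c) ∈ H := hac
      rw [hb']
      exact .head hac' (hCreach c hc v1 hv1C)
  have hreach'' : ∀ {a b : V}, ReflTransGen (Adj H'') a b → ReflTransGen (Adj H) a b :=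
    fun h => reach_mono' hstepH h
  have hv1_reach : ∀ x ∈ C, ReflTransGen (Adj H'') v1 x := by
    intro x hx
    exact zt_head_reach L v1 (fun p hp => hP_sub p hp) hv1 x ((hLC x).2 hx)
  have htransfer : ∀ x y : V, ReflTransGen (Adj H) x y →
      (x ∉ C → ReflTransGen (Adj H'') x y) ∧ (x ∈ C → ReflTransGen (Adj H'') v1 y) := by
    intro x y hxy
    induction hxy using ReflTransGen.head_induction_on with
    | refl =>
      exact ⟨fun _ => .refl, fun hy => hv1_reach y hy⟩
    | @head a c hac hcy ih =>
      by_cases hcC : c ∈ C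
      · refine ⟨fun haC => ?_, fun _ => ih.2 hcC⟩
        exact .head (hEI_mem a c haC hcC hac) (ih.2 hcC)
      · refine ⟨fun haC => .head (hF_sub (a, c) hac hcC) (ih.1 hcC), fun haC => ?_⟩
        exact (hv1_reach a haC).trans (.head (hF_sub (a, c) hac hcC) (ih.1 hcC))
  have hInternal : ∀ v ∈ C, ∃ z ∈ C, (v, z) ∈ H := by
    intro v hv
    obtain ⟨c, hcC, hcv⟩ := Finset.exists_mem_ne hCcard v
    rcases (hCreach v hv c hcC).cases_head with h | ⟨z, hvz, hzc⟩
    · exact absurd h.symm hcv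
    · exact ⟨z, (hmemC z).2 ⟨((hmemC v).1 hv).1.tail hvz,
        hzc.trans ((hmemC c).1 hcC).2⟩, hvz⟩
  have hCin : ∀ x ∈ C, ∃ e ∈ H, e.1 = x ∨ e.2 = x := by
    intro x hx; obtain ⟨z, _, hz⟩ := hInternal x hx; exact ⟨(x, z), hz, Or.inl rfl⟩
  have hCin'' : ∀ x ∈ C, ∃ e ∈ H'', e.1 = x ∨ e.2 = x := by
    intro x hx
    obtain ⟨p, hp, hpx⟩ := zt_cover hLlen ((hLC x).2 hx)
    exact ⟨p, hP_sub p hp, hpx⟩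
  -- vertex set
  have hVset : ∀ v : V, (∃ e ∈ H'', e.1 = v ∨ e.2 = v) ↔ ∃ e ∈ H, e.1 = v ∨ e.2 = v := by
    intro v
    constructor
    · rintro ⟨e, he, hev⟩
      rcases hH''_elim e he with ⟨heH, _⟩ | hz | ⟨h2, h1, a, haC, haH⟩
      · exact ⟨e, heH, hev⟩
      · have hm := zt_mem hz
        rcases hev with h | h
        · exact hCin _ ((hLC _).1 (h ▸ hm.1))
        · exact hCin _ ((hLC _).1 (h ▸ hm.2))
      · rcases hev with h | h
        · exact ⟨(e.1, a), haH, Or.inl h⟩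
        · exact hCin v (by rw [← h, h2]; exact hv1C)
    · rintro ⟨e, he, hev⟩
      by_cases he2 : e.2 ∈ C
      · rcases hev with h | h
        · by_cases he1 : e.1 ∈ C
          · exact hCin'' v (h ▸ he1)
          · exact ⟨(e.1, v1), hEI_mem e.1 e.2 he1 he2 (by simpa using he), Or.inl h⟩
        · exact hCin'' v (h ▸ he2)
      · exact ⟨e, hF_sub e he he2, hev⟩
  -- outdegree
  have houtdeg : ∀ v : V, outDeg H'' v ≤ outDeg H v := by
    intro v
    set A : Finset (V × V) := H.filter (fun e => e.1 = v ∧ e.2 ∉ C) with hAdef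
    set B : Finset (V × V) := H.filter (fun e => e.1 = v ∧ e.2 ∈ C) with hBdef
    have hAmem : ∀ e : V × V, e ∈ A ↔ e ∈ H ∧ e.1 = v ∧ e.2 ∉ C := by
      intro e; simp [hAdef]
    have hBmem : ∀ e : V × V, e ∈ B ↔ e ∈ H ∧ e.1 = v ∧ e.2 ∈ C := by
      intro e; simp [hBdef]
    have hAB : outDeg H v = A.card + B.card := by
      rw [outDeg, ← Finset.card_union_of_disjoint]
      · congr 1
        ext e
        simp only [Finset.mem_filter, Finset.mem_union, hAmem, hBmem]
        tauto
      · rw [Finset.disjoint_left]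
        intro e heA heB
        rw [hAmem] at heA; rw [hBmem] at heB
        exact heA.2.2 heB.2.2
    by_cases hB : B = ∅
    · have hsub : H''.filter (fun e => e.1 = v) ⊆ A := by
        intro e he
        obtain ⟨he, hev⟩ := Finset.mem_filter.1 he
        rcases hH''_elim e he with ⟨heH, h2⟩ | hz | ⟨h2, h1, a, haC, haH⟩
        · exact (hAmem e).2 ⟨heH, hev, h2⟩
        · exfalso
          have hvC : v ∈ C := (hLC _).1 (hev ▸ (zt_mem hz).1)
          obtain ⟨z, hzC, hvz⟩ := hInternal v hvC
          have : (v, z) ∈ B := (hBmem _).2 ⟨hvz, rfl, hzC⟩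
          rw [hB] at this; exact absurd this (Finset.notMem_empty _)
        · exfalso
          have : (e.1, a) ∈ B := (hBmem _).2 ⟨haH, hev, haC⟩
          rw [hB] at this; exact absurd this (Finset.notMem_empty _)
      calc outDeg H'' v ≤ A.card := Finset.card_le_card hsub
        _ ≤ outDeg H v := by omega
    · have hBne : 1 ≤ B.card := Finset.card_pos.2 (Finset.nonempty_iff_ne_empty.2 hB)
      have hsub : H''.filter (fun e => e.1 = v) ⊆ A ∪ ((P ∪ EI).filter (fun e => e.1 = v)) := by
        intro e he
        obtain ⟨he', hev⟩ := Finset.mem_filter.1 he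
        rcases Finset.mem_union.1 he' with he'' | he''
        · rcases Finset.mem_union.1 he'' with he3 | he3
          · obtain ⟨heH, h2⟩ := Finset.mem_filter.1 he3
            exact Finset.mem_union_left _ ((hAmem e).2 ⟨heH, hev, h2⟩)
          · exact Finset.mem_union_right _
              (Finset.mem_filter.2 ⟨Finset.mem_union_left _ he3, hev⟩)
        · exact Finset.mem_union_right _
            (Finset.mem_filter.2 ⟨Finset.mem_union_right _ he'', hev⟩)
      have hone : ((P ∪ EI).filter (fun e => e.1 = v)).card ≤ 1 := by
        rw [Finset.card_le_one]
        intro e he f hf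
        obtain ⟨heP, hev⟩ := Finset.mem_filter.1 he
        obtain ⟨hfP, hfv⟩ := Finset.mem_filter.1 hf
        have hchar : ∀ g : V × V, g ∈ P ∪ EI → g.1 = v →
            ((g.1, g.2) ∈ L.zip L.tail ∧ v ∈ C) ∨ (g.2 = v1 ∧ v ∉ C) := by
          intro g hg hgv
          rcases Finset.mem_union.1 hg with hg | hg
          · have hg' : (g.1, g.2) ∈ L.zip L.tail := by
              rw [Prod.mk.eta]; exact List.mem_toFinset.1 hg
            exact Or.inl ⟨hg', (hLC _).1 (hgv ▸ (zt_mem hg').1)⟩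
          · obtain ⟨x, hx, hxe⟩ := Finset.mem_image.1 hg
            obtain ⟨_, hx1, _⟩ := Finset.mem_filter.1 hx
            exact Or.inr ⟨by rw [← hxe], by rw [← hgv, ← hxe]; exact hx1⟩
        rcases hchar e heP hev with ⟨he1, he2⟩ | ⟨he1, he2⟩ <;>
          rcases hchar f hfP hfv with ⟨hf1, hf2⟩ | ⟨hf1, hf2⟩
        · have : e.2 = f.2 := by
            refine zt_succ_unique hLnd (a := v) ?_ ?_
            · rw [← hev]; exact he1
            · rw [← hfv]; exact hf1
          exact Prod.ext (hev.trans hfv.symm) this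
        · exact absurd he2 hf2
        · exact absurd hf2 he2
        · exact Prod.ext (hev.trans hfv.symm) (he1.trans hf1.symm)
      calc outDeg H'' v ≤ (A ∪ ((P ∪ EI).filter (fun e => e.1 = v))).card :=
            Finset.card_le_card hsub
        _ ≤ A.card + ((P ∪ EI).filter (fun e => e.1 = v)).card := Finset.card_union_le _ _
        _ ≤ A.card + B.card := by omega
        _ = outDeg H v := hAB.symm
  -- no-return
  have hnoret : ∀ a b : V, ReflTransGen (Adj H'') a b → a ∈ C → ReflTransGen (Adj H) b a →
      b ∈ C ∧ L.idxOf a ≤ L.idxOf b := by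
    intro a b hab
    induction hab using ReflTransGen.head_induction_on with
    | refl => exact fun hb _ => ⟨hb, le_refl _⟩
    | @head a z haz hzb ih =>
      intro haC hba
      have hazH : ReflTransGen (Adj H) a z := hstepH a z haz
      have hzbH : ReflTransGen (Adj H) z b := hreach'' hzb
      have hzC : z ∈ C := (hmemC z).2 ⟨((hmemC a).1 haC).1.trans hazH,
        hzbH.trans (hba.trans ((hmemC a).1 haC).2)⟩
      have hPedge : (a, z) ∈ L.zip L.tail := by
        rcases hH''_elim (a, z) haz with ⟨_, h⟩ | h | ⟨_, h, _⟩
        · exact absurd hzC h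
        · exact h
        · exact absurd haC h
      have hidx := zt_indexOf hLnd hPedge
      have hih := ih hzC (hba.trans hazH)
      exact ⟨hih.1, by omega⟩
  -- mu decrease
  have hmu : mu H'' < mu H := by
    unfold mu
    apply Finset.card_lt_card
    rw [Finset.ssubset_iff_of_subset ?_]
    · refine ⟨(u, u'), ?_, ?_⟩
      · simp only [Finset.mem_filter, Finset.mem_univ, true_and]
        exact ⟨hne, h1, h2⟩
      · simp only [Finset.mem_filter, Finset.mem_univ, true_and, not_and]
        intro _ ha hb
        obtain ⟨_, hle⟩ := hnoret u u' ha huC (hreach'' hb)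
        obtain ⟨_, hle'⟩ := hnoret u' u hb hu'C (hreach'' ha)
        exact hne ((List.idxOf_inj ((hLC u).2 huC)).1 (by omega))
    · intro p hp
      simp only [Finset.mem_filter, Finset.mem_univ, true_and] at hp ⊢
      exact ⟨hp.1, hreach'' hp.2.1, hreach'' hp.2.2⟩
  -- solution
  have hSol : RSPPSolution D K T H'' := by
    refine ⟨?_, fun v => le_trans (houtdeg v) (hH.2.1 v), ?_⟩
    · rintro ⟨e1, e2⟩ he
      rcases hH''_elim (e1, e2) he with ⟨heH, _⟩ | hz | ⟨h2', h1', a, haC, haH⟩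
      · exact hH.1 _ heH
      · have hm := zt_mem hz
        exact ⟨zt_ne hLnd hz, hDreach (hCreach _ ((hLC _).1 hm.1) _ ((hLC _).1 hm.2))⟩
      · have h2'' : e2 = v1 := h2'
        have h1'' : e1 ∉ C := h1'
        have haH' : (e1, a) ∈ H := haH
        refine ⟨fun h => h1'' (by rw [show e1 = e2 from h, h2'']; exact hv1C), ?_⟩
        show ReflTransGen (Adj D) e1 e2
        rw [h2'']
        exact hDreach (ReflTransGen.head haH' (hCreach a haC v1 hv1C))
    · intro k hk
      obtain ⟨l, hc, hnd, hh, hl⟩ := hH.2.2 k hk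
      have hreach : ReflTransGen (Adj H) k.1 k.2 := chain'_reach l hc hh hl
      have hs : k.1 ∉ C := fun hs => hbad ⟨k, hk, (hmemC _).1 hs⟩
      exact reach_dipath ((htransfer k.1 k.2 hreach).1 hs)
  exact ⟨H'', hSol, hVset, houtdeg, hmu⟩

/-- Let `S` be the set of sources of commodities of the
MD-RSPP instance `(D,K,T)`. If `H` is a solution graph of `(D,K,T)`, then there
is a solution graph `H'` with the same vertex set (the same set of vertices
incident to an edge), in which every vertex has outdegree at most its outdegree
in `H`, and in which every strongly connected component with at least two
vertices contains a source: whenever `u ≠ v` are mutually reachable in `H'`,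
some source of a commodity is in the strongly connected component of `u`. -/
theorem mdrspp_scc_sources {V : Type*} [Fintype V] [DecidableEq V]
    (D K : Finset (V × V)) (T : ℕ)
    (hD : IsDigraph D)
    (H : Finset (V × V)) (hH : RSPPSolution D K T H) :
    ∃ H' : Finset (V × V), RSPPSolution D K T H' ∧
      (∀ v : V, (∃ e ∈ H', e.1 = v ∨ e.2 = v) ↔ (∃ e ∈ H, e.1 = v ∨ e.2 = v)) ∧
      (∀ v : V, outDeg H' v ≤ outDeg H v) ∧
      (∀ u v : V, u ≠ v →
        Relation.ReflTransGen (Adj H') u v → Relation.ReflTransGen (Adj H') v u →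
        ∃ k ∈ K, Relation.ReflTransGen (Adj H') u k.1 ∧
          Relation.ReflTransGen (Adj H') k.1 u) := by
  classical
  suffices h : ∀ (n : ℕ) (H : Finset (V × V)), mu H = n → RSPPSolution D K T H →
      ∃ H' : Finset (V × V), RSPPSolution D K T H' ∧
      (∀ v : V, (∃ e ∈ H', e.1 = v ∨ e.2 = v) ↔ (∃ e ∈ H, e.1 = v ∨ e.2 = v)) ∧
      (∀ v : V, outDeg H' v ≤ outDeg H v) ∧
      (∀ u v : V, u ≠ v →
        Relation.ReflTransGen (Adj H') u v → Relation.ReflTransGen (Adj H') v u →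
        ∃ k ∈ K, Relation.ReflTransGen (Adj H') u k.1 ∧
          Relation.ReflTransGen (Adj H') k.1 u) by
    exact h (mu H) H rfl hH
  intro n
  induction n using Nat.strong_induction_on with
  | _ n ih =>
    intro H hm hHsol
    by_cases hgood : ∀ u v : V, u ≠ v →
        ReflTransGen (Adj H) u v → ReflTransGen (Adj H) v u →
        ∃ k ∈ K, ReflTransGen (Adj H) u k.1 ∧ ReflTransGen (Adj H) k.1 u
    · exact ⟨H, hHsol, fun v => Iff.rfl, fun v => le_refl _, hgood⟩
    · push_neg at hgood
      obtain ⟨u, v, hne, hr1, hr2, hbad⟩ := hgood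
      obtain ⟨H'', hSol'', hV'', hdeg'', hmu''⟩ :=
        mu_step D K T hD H hHsol hne hr1 hr2 (by push_neg; exact hbad)
      obtain ⟨H', hSol', hV', hdeg', hscc'⟩ :=
        ih (mu H'') (hm ▸ hmu'') H'' rfl hSol''
      exact ⟨H', hSol', fun w => (hV' w).trans (hV'' w),
        fun w => le_trans (hdeg' w) (hdeg'' w), hscc'⟩
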